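/- arXiv:1208.6265 — 2 statements merged into one kernel-verified Lean document; each statement's English description precedes it below -/
import Mathlib

section
/- The second product ∘ is bicovariant: for every x ∈ H1□H1 one has DL(∘(x)) = (id_H ⊗ ∘)((DL ⊗ id_{H1})(x)), and for every x ∈ H1⊗H1 one has DR(∘(x)) = (∘ ⊗ id_H)((id_{H1} ⊗ DR)(x)). (Part of the proof of Theorem 2.6: ∘ restricted to H1□H1 is a morphism of H-bicomodules.) -/
open TensorProduct

noncomputable section

variable (k A H : Type*) [Field k] [Ring A] [Ring H]
  [HopfAlgebra k A] [HopfAlgebra k H]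

/-- `t(a⊗h) = d(a)h`. -/
def tmap (d : A →ₗ[k] H) : A ⊗[k] H →ₗ[k] H :=
  LinearMap.mul' k H ∘ₗ map d LinearMap.id

/-- `s(a⊗h) = ε(a)h`. -/
def smap : A ⊗[k] H →ₗ[k] H :=
  (TensorProduct.lid k H).toLinearMap ∘ₗ map (Coalgebra.counit : A →ₗ[k] k) LinearMap.id

/-- `i(h) = 1⊗h`. -/
def imap : H →ₗ[k] A ⊗[k] H := TensorProduct.mk k A H 1

/-- The tensor-product coproduct `Δ(a⊗h) = (a₁⊗h₁) ⊗ (a₂⊗h₂)` on `H1 = A ⊗ H`. -/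
def comul1 : A ⊗[k] H →ₗ[k] (A ⊗[k] H) ⊗[k] (A ⊗[k] H) :=
  (tensorTensorTensorComm k A A H H).toLinearMap ∘ₗ
    map (Coalgebra.comul : A →ₗ[k] A ⊗[k] A) (Coalgebra.comul : H →ₗ[k] H ⊗[k] H)

/-- The tensor-product counit `ε(a⊗h) = ε(a)ε(h)` on `H1 = A ⊗ H`. -/
def counit1 : A ⊗[k] H →ₗ[k] k :=
  (TensorProduct.lid k k).toLinearMap ∘ₗ
    map (Coalgebra.counit : A →ₗ[k] k) (Coalgebra.counit : H →ₗ[k] k)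

/-- The left coaction `DL = (t⊗id)Δ`. -/
def DLmap (d : A →ₗ[k] H) : A ⊗[k] H →ₗ[k] H ⊗[k] (A ⊗[k] H) :=
  map (tmap k A H d) LinearMap.id ∘ₗ comul1 k A H

/-- The right coaction `DR = (id⊗s)Δ`. -/
def DRmap : A ⊗[k] H →ₗ[k] (A ⊗[k] H) ⊗[k] H :=
  map LinearMap.id (smap k A H) ∘ₗ comul1 k A H

/-- The second product `(a⊗h)∘(b⊗g) = ε(h) ab ⊗ g`. -/
def circ : (A ⊗[k] H) ⊗[k] (A ⊗[k] H) →ₗ[k] A ⊗[k] H :=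
  map (LinearMap.mul' k A)
      ((TensorProduct.lid k H).toLinearMap ∘ₗ map (Coalgebra.counit : H →ₗ[k] k) LinearMap.id)
    ∘ₗ (tensorTensorTensorComm k A H A H).toLinearMap

/-- The quantum groupoid antipode `𝒮(a⊗h) = S(a₁) ⊗ d(a₂)h`. -/
def SS (d : A →ₗ[k] H) : A ⊗[k] H →ₗ[k] A ⊗[k] H :=
  map (HopfAlgebra.antipode (R := k) : A →ₗ[k] A) (tmap k A H d)
    ∘ₗ (TensorProduct.assoc k A A H).toLinearMap
    ∘ₗ map (Coalgebra.comul : A →ₗ[k] A ⊗[k] A) LinearMap.id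

/-- The smash product multiplication `(a⊗h)(b⊗g) = a(h₁▷b) ⊗ h₂g`. -/
def smashMul (act : H ⊗[k] A →ₗ[k] A) :
    (A ⊗[k] H) ⊗[k] (A ⊗[k] H) →ₗ[k] A ⊗[k] H :=
  map (LinearMap.mul' k A) LinearMap.id
  ∘ₗ (TensorProduct.assoc k A A H).symm.toLinearMap
  ∘ₗ map LinearMap.id
      (map act (LinearMap.mul' k H)
        ∘ₗ (tensorTensorTensorComm k H H A H).toLinearMap)
  ∘ₗ (TensorProduct.assoc k A (H ⊗[k] H) (A ⊗[k] H)).toLinearMap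
  ∘ₗ map (map LinearMap.id (Coalgebra.comul : H →ₗ[k] H ⊗[k] H)) LinearMap.id

/-- The cotensor product `H1□H1`. -/
def cot (d : A →ₗ[k] H) : Set ((A ⊗[k] H) ⊗[k] (A ⊗[k] H)) :=
  {x | (TensorProduct.assoc k (A ⊗[k] H) H (A ⊗[k] H)).toLinearMap
        (map (DRmap k A H) LinearMap.id x) = map LinearMap.id (DLmap k A H d) x}

/-- A Hopf (algebra) crossed module. -/
structure HopfCrossedModule (act : H ⊗[k] A →ₗ[k] A) (d : A →ₗ[k] H) : Prop where
  /-- `(hg)▷a = h▷(g▷a)` -/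
  act_mul : ∀ (h g : H) (a : A), act ((h * g) ⊗ₜ[k] a) = act (h ⊗ₜ[k] act (g ⊗ₜ[k] a))
  /-- `1▷a = a` -/
  act_one : ∀ a : A, act ((1 : H) ⊗ₜ[k] a) = a
  /-- `h▷(ab) = (h₁▷a)(h₂▷b)` -/
  act_mul_alg : act ∘ₗ map LinearMap.id (LinearMap.mul' k A)
      = LinearMap.mul' k A ∘ₗ map act act
          ∘ₗ (tensorTensorTensorComm k H H A A).toLinearMap
          ∘ₗ map (Coalgebra.comul : H →ₗ[k] H ⊗[k] H) LinearMap.id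
  /-- `h▷1 = ε(h)1` -/
  act_unit : ∀ h : H, act (h ⊗ₜ[k] (1 : A)) = (Coalgebra.counit h : k) • (1 : A)
  /-- `Δ(h▷a) = (h₁▷a₁)⊗(h₂▷a₂)` -/
  act_comul : (Coalgebra.comul : A →ₗ[k] A ⊗[k] A) ∘ₗ act
      = map act act ∘ₗ (tensorTensorTensorComm k H H A A).toLinearMap
          ∘ₗ map (Coalgebra.comul : H →ₗ[k] H ⊗[k] H) (Coalgebra.comul : A →ₗ[k] A ⊗[k] A)
  /-- `ε(h▷a) = ε(h)ε(a)` -/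
  act_counit : ∀ (h : H) (a : A),
      (Coalgebra.counit (act (h ⊗ₜ[k] a)) : k) = Coalgebra.counit h * Coalgebra.counit a
  /-- `h₁ ⊗ (h₂▷a) = h₂ ⊗ (h₁▷a)` -/
  act_cocomm : map LinearMap.id act ∘ₗ (TensorProduct.assoc k H H A).toLinearMap
        ∘ₗ map (Coalgebra.comul : H →ₗ[k] H ⊗[k] H) LinearMap.id
      = map LinearMap.id act ∘ₗ (TensorProduct.assoc k H H A).toLinearMap
        ∘ₗ map ((TensorProduct.comm k H H).toLinearMap
              ∘ₗ (Coalgebra.comul : H →ₗ[k] H ⊗[k] H)) LinearMap.id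
  /-- `d` is multiplicative -/
  d_mul : ∀ a b : A, d (a * b) = d a * d b
  /-- `d(1) = 1` -/
  d_one : d 1 = 1
  /-- `d` is comultiplicative -/
  d_comul : (Coalgebra.comul : H →ₗ[k] H ⊗[k] H) ∘ₗ d
      = map d d ∘ₗ (Coalgebra.comul : A →ₗ[k] A ⊗[k] A)
  /-- `ε∘d = ε` -/
  d_counit : (Coalgebra.counit : H →ₗ[k] k) ∘ₗ d = (Coalgebra.counit : A →ₗ[k] k)
  /-- `d(h▷a) = h₁ d(a) S(h₂)` -/
  d_act : d ∘ₗ act = LinearMap.mul' k H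
      ∘ₗ map LinearMap.id (LinearMap.mul' k H
            ∘ₗ map LinearMap.id (HopfAlgebra.antipode (R := k) : H →ₗ[k] H)
            ∘ₗ (TensorProduct.comm k H H).toLinearMap)
      ∘ₗ (TensorProduct.assoc k H H H).toLinearMap
      ∘ₗ map (Coalgebra.comul : H →ₗ[k] H ⊗[k] H) d
  /-- `d(a)▷b = a₁ b S(a₂)` -/
  crossed : act ∘ₗ map d LinearMap.id = LinearMap.mul' k A
      ∘ₗ map LinearMap.id (LinearMap.mul' k A
            ∘ₗ map LinearMap.id (HopfAlgebra.antipode (R := k) : A →ₗ[k] A)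
            ∘ₗ (TensorProduct.comm k A A).toLinearMap)
      ∘ₗ (TensorProduct.assoc k A A A).toLinearMap
      ∘ₗ map (Coalgebra.comul : A →ₗ[k] A ⊗[k] A) LinearMap.id


private lemma sum_counit_smul_right {B : Type*} [AddCommGroup B] [Module k B]
    [Coalgebra k B] {b : B} {ι : Type*} (r : Coalgebra.Repr k b ι) :
    ∑ i ∈ r.index, Coalgebra.counit (R := k) (r.left i) • r.right i = b := by
  have h := congrArg (TensorProduct.lid k B) (Coalgebra.sum_counit_tmul_eq r)
  rw [map_sum] at h
  simp only [lid_tmul, one_smul] at h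
  exact h

private lemma sum_counit_smul_left {B : Type*} [AddCommGroup B] [Module k B]
    [Coalgebra k B] {b : B} {ι : Type*} (r : Coalgebra.Repr k b ι) :
    ∑ i ∈ r.index, Coalgebra.counit (R := k) (r.right i) • r.left i = b := by
  have h := congrArg (TensorProduct.rid k B) (Coalgebra.sum_tmul_counit_eq r)
  rw [map_sum] at h
  simp only [rid_tmul, one_smul] at h
  exact h

/-- A representation of `comul (a*b)` from representations of `comul a`, `comul b`. -/
private def mulRepr {a b : A} {ι κ : Type*} (ra : Coalgebra.Repr k a ι) (rb : Coalgebra.Repr k b κ) :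
    Coalgebra.Repr k (a * b) (ι × κ) where
  index := ra.index ×ˢ rb.index
  left := fun p => ra.left p.1 * rb.left p.2
  right := fun p => ra.right p.1 * rb.right p.2
  eq := by
    rw [Finset.sum_product]
    have h2 : CoalgebraStruct.comul (R := k) (a * b)
        = CoalgebraStruct.comul (R := k) a * CoalgebraStruct.comul (R := k) b :=
      Bialgebra.comul_mul a b
    rw [h2, ← ra.eq, ← rb.eq, Finset.sum_mul_sum]
    simp [Algebra.TensorProduct.tmul_mul_tmul]

private lemma comul1_tmul (a : A) (h : H) {ι κ : Type*} (ra : Coalgebra.Repr k a ι)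
    (rh : Coalgebra.Repr k h κ) :
    comul1 k A H (a ⊗ₜ[k] h) = ∑ i ∈ ra.index, ∑ j ∈ rh.index,
      (ra.left i ⊗ₜ[k] rh.left j) ⊗ₜ[k] (ra.right i ⊗ₜ[k] rh.right j) := by
  have h1 : comul1 k A H (a ⊗ₜ[k] h)
      = (tensorTensorTensorComm k A A H H).toLinearMap
          ((∑ i ∈ ra.index, ra.left i ⊗ₜ[k] ra.right i) ⊗ₜ[k]
           (∑ j ∈ rh.index, rh.left j ⊗ₜ[k] rh.right j)) := by
    rw [ra.eq, rh.eq]; rfl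
  rw [h1, sum_tmul]
  simp [tmul_sum, map_sum, tensorTensorTensorComm_tmul]

private lemma circ_tmul (a : A) (h : H) (b : A) (g : H) :
    circ k A H ((a ⊗ₜ[k] h) ⊗ₜ[k] (b ⊗ₜ[k] g))
      = Coalgebra.counit (R := k) h • ((a * b) ⊗ₜ[k] g) := by
  simp [circ, LinearMap.mul'_apply, tmul_smul]

private lemma DL_tmul (d : A →ₗ[k] H) (a : A) (h : H) {ι κ : Type*} (ra : Coalgebra.Repr k a ι)
    (rh : Coalgebra.Repr k h κ) :
    DLmap k A H d (a ⊗ₜ[k] h) = ∑ i ∈ ra.index, ∑ j ∈ rh.index,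
      (d (ra.left i) * rh.left j) ⊗ₜ[k] (ra.right i ⊗ₜ[k] rh.right j) := by
  simp only [DLmap, LinearMap.comp_apply, comul1_tmul k A H a h ra rh, map_sum]
  simp [tmap, LinearMap.mul'_apply]

private lemma DR_eq : DRmap k A H
    = (TensorProduct.assoc k A H H).symm.toLinearMap
        ∘ₗ map LinearMap.id (Coalgebra.comul : H →ₗ[k] H ⊗[k] H) := by
  ext a h
  simp only [AlgebraTensorModule.curry_apply, curry_apply, LinearMap.coe_restrictScalars]
  obtain ⟨ra⟩ : Nonempty (Coalgebra.Repr k a (A × A)) := ⟨Coalgebra.Repr.arbitrary k a⟩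
  obtain ⟨rh⟩ : Nonempty (Coalgebra.Repr k h (H × H)) := ⟨Coalgebra.Repr.arbitrary k h⟩
  have hrhs : ((TensorProduct.assoc k A H H).symm.toLinearMap
        ∘ₗ map LinearMap.id (Coalgebra.comul : H →ₗ[k] H ⊗[k] H)) (a ⊗ₜ[k] h)
      = ∑ j ∈ rh.index, (a ⊗ₜ[k] rh.left j) ⊗ₜ[k] rh.right j := by
    rw [LinearMap.comp_apply, map_tmul, ← rh.eq]
    simp [tmul_sum, map_sum]
  rw [hrhs]
  simp only [DRmap, LinearMap.comp_apply, comul1_tmul k A H a h ra rh, map_sum,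
    map_tmul, LinearMap.id_coe, id_eq, smap, LinearEquiv.coe_coe, lid_tmul,
    tmul_sum, assoc_symm_tmul, tmul_smul]
  rw [Finset.sum_comm]
  refine Finset.sum_congr rfl fun j _ => ?_
  rw [Finset.sum_congr rfl (fun i _ => by
        rw [smul_tmul', smul_tmul'] :
      ∀ i ∈ ra.index, Coalgebra.counit (R := k) (ra.right i) •
          ((ra.left i ⊗ₜ[k] rh.left j) ⊗ₜ[k] rh.right j)
        = ((Coalgebra.counit (R := k) (ra.right i) • ra.left i) ⊗ₜ[k] rh.left j)
            ⊗ₜ[k] rh.right j),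
    ← sum_tmul, ← sum_tmul, sum_counit_smul_left k ra]

private def theta (d : A →ₗ[k] H) : A ⊗[k] H →ₗ[k] H ⊗[k] A :=
  map d LinearMap.id ∘ₗ (Coalgebra.comul : A →ₗ[k] A ⊗[k] A)
    ∘ₗ (TensorProduct.rid k A).toLinearMap
    ∘ₗ map LinearMap.id (Coalgebra.counit : H →ₗ[k] k)

private lemma theta_tmul (d : A →ₗ[k] H) (a : A) (h : H) {ι : Type*} (ra : Coalgebra.Repr k a ι) :
    theta k A H d (a ⊗ₜ[k] h)
      = ∑ i ∈ ra.index, Coalgebra.counit (R := k) h • (d (ra.left i) ⊗ₜ[k] ra.right i) := by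
  simp only [theta, LinearMap.comp_apply, map_tmul, LinearMap.id_coe, id_eq,
    LinearEquiv.coe_coe, rid_tmul, map_smul]
  rw [← ra.eq]
  simp [Finset.smul_sum, map_sum]

private def Phi (d : A →ₗ[k] H) :
    (A ⊗[k] H) ⊗[k] (H ⊗[k] (A ⊗[k] H)) →ₗ[k] H ⊗[k] (A ⊗[k] H) :=
  map (LinearMap.mul' k H)
      (map (LinearMap.mul' k A) LinearMap.id ∘ₗ (TensorProduct.assoc k A A H).symm.toLinearMap)
    ∘ₗ (tensorTensorTensorComm k H A H (A ⊗[k] H)).toLinearMap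
    ∘ₗ map (theta k A H d) LinearMap.id

private lemma Phi_tmul (d : A →ₗ[k] H) (a : A) (h : H) (h' : H) (b : A) (g : H)
    {ι : Type*} (ra : Coalgebra.Repr k a ι) :
    Phi k A H d ((a ⊗ₜ[k] h) ⊗ₜ[k] (h' ⊗ₜ[k] (b ⊗ₜ[k] g)))
      = ∑ i ∈ ra.index, Coalgebra.counit (R := k) h •
          ((d (ra.left i) * h') ⊗ₜ[k] ((ra.right i * b) ⊗ₜ[k] g)) := by
  simp only [Phi, LinearMap.comp_apply, map_tmul, LinearMap.id_coe, id_eq,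
    theta_tmul k A H d a h ra, sum_tmul, smul_tmul', map_sum, map_smul,
    LinearEquiv.coe_coe, tensorTensorTensorComm_tmul, LinearMap.mul'_apply,
    assoc_symm_tmul]
  simp [smul_tmul', LinearMap.mul'_apply]

private lemma DR_tmul (a : A) (h : H) {ι : Type*} (rh : Coalgebra.Repr k h ι) :
    DRmap k A H (a ⊗ₜ[k] h)
      = ∑ j ∈ rh.index, (a ⊗ₜ[k] rh.left j) ⊗ₜ[k] rh.right j := by
  rw [DR_eq, LinearMap.comp_apply, map_tmul, ← rh.eq]
  simp [tmul_sum, map_sum]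

private lemma right_cov : DRmap k A H ∘ₗ circ k A H
    = map (circ k A H) LinearMap.id
        ∘ₗ (TensorProduct.assoc k (A ⊗[k] H) (A ⊗[k] H) H).symm.toLinearMap
        ∘ₗ map LinearMap.id (DRmap k A H) := by
  ext a h b g
  simp only [AlgebraTensorModule.curry_apply, curry_apply, LinearMap.coe_restrictScalars,
    LinearMap.comp_apply, map_tmul, LinearMap.id_coe, id_eq]
  obtain ⟨rg⟩ : Nonempty (Coalgebra.Repr k g (H × H)) := ⟨Coalgebra.Repr.arbitrary k g⟩
  rw [circ_tmul, map_smul, DR_tmul k A H (a * b) g rg, DR_tmul k A H b g rg]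
  simp only [tmul_sum, map_sum, LinearEquiv.coe_coe, assoc_symm_tmul, map_tmul,
    LinearMap.id_coe, id_eq, circ_tmul, Finset.smul_sum]
  exact Finset.sum_congr rfl fun j _ => by rw [smul_tmul']

private lemma left_cov_1 (d : A →ₗ[k] H) (hd : ∀ a b : A, d (a * b) = d a * d b) :
    DLmap k A H d ∘ₗ circ k A H = Phi k A H d ∘ₗ map LinearMap.id (DLmap k A H d) := by
  ext a h b g
  simp only [AlgebraTensorModule.curry_apply, curry_apply, LinearMap.coe_restrictScalars,
    LinearMap.comp_apply, map_tmul, LinearMap.id_coe, id_eq]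
  obtain ⟨ra⟩ : Nonempty (Coalgebra.Repr k a (A × A)) := ⟨Coalgebra.Repr.arbitrary k a⟩
  obtain ⟨rb⟩ : Nonempty (Coalgebra.Repr k b (A × A)) := ⟨Coalgebra.Repr.arbitrary k b⟩
  obtain ⟨rg⟩ : Nonempty (Coalgebra.Repr k g (H × H)) := ⟨Coalgebra.Repr.arbitrary k g⟩
  rw [circ_tmul, map_smul, DL_tmul k A H d (a * b) g (mulRepr k A ra rb) rg,
      DL_tmul k A H d b g rb rg]
  simp only [tmul_sum, map_sum, Phi_tmul k A H d a h _ _ _ ra]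
  simp only [mulRepr, Finset.sum_product, hd, Finset.smul_sum, mul_assoc]
  rw [Finset.sum_comm]
  exact Finset.sum_congr rfl fun i' _ => Finset.sum_comm

private lemma left_cov_2 (d : A →ₗ[k] H) :
    Phi k A H d ∘ₗ (TensorProduct.assoc k (A ⊗[k] H) H (A ⊗[k] H)).toLinearMap
        ∘ₗ map (DRmap k A H) LinearMap.id
      = map LinearMap.id (circ k A H)
          ∘ₗ (TensorProduct.assoc k H (A ⊗[k] H) (A ⊗[k] H)).toLinearMap
          ∘ₗ map (DLmap k A H d) LinearMap.id := by
  ext a h b g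
  simp only [AlgebraTensorModule.curry_apply, curry_apply, LinearMap.coe_restrictScalars,
    LinearMap.comp_apply, map_tmul, LinearMap.id_coe, id_eq]
  obtain ⟨ra⟩ : Nonempty (Coalgebra.Repr k a (A × A)) := ⟨Coalgebra.Repr.arbitrary k a⟩
  obtain ⟨rh⟩ : Nonempty (Coalgebra.Repr k h (H × H)) := ⟨Coalgebra.Repr.arbitrary k h⟩
  rw [DR_tmul k A H a h rh, DL_tmul k A H d a h ra rh]
  simp only [sum_tmul, map_sum, LinearEquiv.coe_coe, assoc_tmul, map_tmul,
    LinearMap.id_coe, id_eq, Phi_tmul k A H d a _ _ b g ra, circ_tmul, tmul_smul]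
  have key1 : ∀ (y : H) (X : A ⊗[k] H),
      ∑ j ∈ rh.index, Coalgebra.counit (R := k) (rh.left j) • ((y * rh.right j) ⊗ₜ[k] X)
        = (y * h) ⊗ₜ[k] X := by
    intro y X
    calc ∑ j ∈ rh.index, Coalgebra.counit (R := k) (rh.left j) • ((y * rh.right j) ⊗ₜ[k] X)
        = ∑ j ∈ rh.index, (y * (Coalgebra.counit (R := k) (rh.left j) • rh.right j)) ⊗ₜ[k] X := by
          simp only [smul_tmul', ← mul_smul_comm]
      _ = (∑ j ∈ rh.index, y * (Coalgebra.counit (R := k) (rh.left j) • rh.right j)) ⊗ₜ[k] X := by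
          rw [← sum_tmul]
      _ = (y * h) ⊗ₜ[k] X := by rw [← Finset.mul_sum, sum_counit_smul_right k rh]
  have key2 : ∀ (y : H) (X : A ⊗[k] H),
      ∑ j ∈ rh.index, Coalgebra.counit (R := k) (rh.right j) • ((y * rh.left j) ⊗ₜ[k] X)
        = (y * h) ⊗ₜ[k] X := by
    intro y X
    calc ∑ j ∈ rh.index, Coalgebra.counit (R := k) (rh.right j) • ((y * rh.left j) ⊗ₜ[k] X)
        = ∑ j ∈ rh.index, (y * (Coalgebra.counit (R := k) (rh.right j) • rh.left j)) ⊗ₜ[k] X := by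
          simp only [smul_tmul', ← mul_smul_comm]
      _ = (∑ j ∈ rh.index, y * (Coalgebra.counit (R := k) (rh.right j) • rh.left j)) ⊗ₜ[k] X := by
          rw [← sum_tmul]
      _ = (y * h) ⊗ₜ[k] X := by rw [← Finset.mul_sum, sum_counit_smul_left k rh]
  rw [Finset.sum_comm]
  exact Finset.sum_congr rfl fun i _ => (key1 _ _).trans (key2 _ _).symm

/-- Theorem 2.6 (part of proof): the second product `∘` is bicovariant: on `H1□H1` it is
left covariant, and on all of `H1⊗H1` it is right covariant. -/
theorem statement4 (act : H ⊗[k] A →ₗ[k] A) (d : A →ₗ[k] H)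
    (hcm : HopfCrossedModule k A H act d) :
    (∀ x ∈ cot k A H d,
      DLmap k A H d (circ k A H x)
        = map LinearMap.id (circ k A H)
            ((TensorProduct.assoc k H (A ⊗[k] H) (A ⊗[k] H)).toLinearMap
              (map (DLmap k A H d) LinearMap.id x)))
    ∧ (∀ x : (A ⊗[k] H) ⊗[k] (A ⊗[k] H),
      DRmap k A H (circ k A H x)
        = map (circ k A H) LinearMap.id
            ((TensorProduct.assoc k (A ⊗[k] H) (A ⊗[k] H) H).symm.toLinearMap
              (map LinearMap.id (DRmap k A H) x))) := by
  constructor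
  · intro x hx
    have hx' : (TensorProduct.assoc k (A ⊗[k] H) H (A ⊗[k] H)).toLinearMap
        (map (DRmap k A H) LinearMap.id x) = map LinearMap.id (DLmap k A H d) x := hx
    have h1 := LinearMap.congr_fun (left_cov_1 k A H d hcm.d_mul) x
    have h2 := LinearMap.congr_fun (left_cov_2 k A H d) x
    simp only [LinearMap.comp_apply] at h1 h2
    rw [h1, ← hx', h2]
  · intro x
    have h3 := LinearMap.congr_fun (right_cov k A H) x
    simpa only [LinearMap.comp_apply] using h3

end
end

section
/- The map 𝒮 satisfies the quantum-groupoid antipode conditions: ∘ ∘ (𝒮 ⊗ id) ∘ Δ = i ∘ s and ∘ ∘ (id ⊗ 𝒮) ∘ Δ = i ∘ t; explicitly, 𝒮(a_(1)⊗h_(1))∘(a_(2)⊗h_(2)) = ε(a)(1⊗h) and (a_(1)⊗h_(1))∘𝒮(a_(2)⊗h_(2)) = 1⊗d(a)h for all a ∈ A, h ∈ H. (Part of Theorem 2.6.) -/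
open TensorProduct

noncomputable section

variable (k A H : Type*) [Field k] [Ring A] [Ring H]
  [HopfAlgebra k A] [HopfAlgebra k H]

set_option maxHeartbeats 1000000
set_option synthInstance.maxHeartbeats 400000
open Coalgebra in
lemma aux_circ_tmul (p b : A) (q g : H) :
    circ k A H ((p ⊗ₜ[k] q) ⊗ₜ[k] (b ⊗ₜ[k] g))
      = Coalgebra.counit (R := k) q • ((p * b) ⊗ₜ[k] g) := by
  simp [circ, tensorTensorTensorComm_tmul, LinearMap.mul'_apply, smul_tmul']

open Coalgebra in
lemma aux_SS_tmul (d : A →ₗ[k] H) (x : A) (u : H) (r : Coalgebra.Repr k x (A × A)) :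
    SS k A H d (x ⊗ₜ[k] u)
      = ∑ l ∈ r.index, (HopfAlgebra.antipode (R := k) (r.left l))
          ⊗ₜ[k] (d (r.right l) * u) := by
  simp [SS, ← r.eq, sum_tmul, map_sum, tmap, LinearMap.mul'_apply]

open Coalgebra in
lemma aux_comul1_tmul (a : A) (h : H) (ra : Coalgebra.Repr k a (A × A)) (rh : Coalgebra.Repr k h (H × H)) :
    comul1 k A H (a ⊗ₜ[k] h)
      = ∑ i ∈ ra.index, ∑ j ∈ rh.index,
          (ra.left i ⊗ₜ[k] rh.left j) ⊗ₜ[k] (ra.right i ⊗ₜ[k] rh.right j) := by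
  simp only [comul1, ← ra.eq, ← rh.eq, LinearMap.comp_apply, map_tmul,
    LinearMap.coe_comp, LinearEquiv.coe_coe, Function.comp_apply, sum_tmul, tmul_sum, map_sum,
    tensorTensorTensorComm_tmul]
  exact Finset.sum_comm

open Coalgebra in
lemma aux_counit_smul {M : Type*} [Ring M] [HopfAlgebra k M] {a : M} (r : Coalgebra.Repr k a (M × M)) :
    ∑ i ∈ r.index, Coalgebra.counit (R := k) (r.left i) • r.right i = a := by
  have h2 : (TensorProduct.lid k M).toLinearMap
        (∑ i ∈ r.index, Coalgebra.counit (R := k) (r.left i) ⊗ₜ[k] r.right i)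
      = (TensorProduct.lid k M).toLinearMap ((1 : k) ⊗ₜ[k] a) := by
    rw [sum_counit_tmul_eq r]
  simp only [map_sum, LinearEquiv.coe_coe, TensorProduct.lid_tmul, one_smul] at h2
  exact h2

open Coalgebra in
lemma aux_smul_counit {M : Type*} [Ring M] [HopfAlgebra k M] {a : M} (r : Coalgebra.Repr k a (M × M)) :
    ∑ i ∈ r.index, Coalgebra.counit (R := k) (r.right i) • r.left i = a := by
  have h2 : (TensorProduct.rid k M).toLinearMap
        (∑ i ∈ r.index, r.left i ⊗ₜ[k] Coalgebra.counit (R := k) (r.right i))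
      = (TensorProduct.rid k M).toLinearMap (a ⊗ₜ[k] (1 : k)) := by
    rw [sum_tmul_counit_eq r]
  simp only [map_sum, LinearEquiv.coe_coe, TensorProduct.rid_tmul, one_smul] at h2
  exact h2
open Coalgebra HopfAlgebra in
lemma aux_key2 (d : A →ₗ[k] H) (a : A) (h : H) (ra : Coalgebra.Repr k a (A × A))
    (s : (i : ra.ι) → Coalgebra.Repr k (ra.right i) (A × A)) :
    ∑ i ∈ ra.index, ∑ l ∈ (s i).index,
        (ra.left i * antipode (R := k) ((s i).left l)) ⊗ₜ[k] (d ((s i).right l) * h)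
      = (1 : A) ⊗ₜ[k] (d a * h) := by
  classical
  set t : (i : ra.ι) → Coalgebra.Repr k (ra.left i) (A × A) := fun i => ℛ k (ra.left i) with ht
  have key := sum_tmul_tmul_eq ra t s
  have key2 := congrArg (TensorProduct.map (LinearMap.mul' k A) (LinearMap.mulRight k h)
      ∘ₗ (TensorProduct.assoc k A A H).symm.toLinearMap
      ∘ₗ TensorProduct.map LinearMap.id (TensorProduct.map (antipode (R := k)) d)) key
  simp only [map_sum, LinearMap.coe_comp, Function.comp_apply, LinearEquiv.coe_coe,
    map_tmul, LinearMap.id_coe, id_eq, assoc_symm_tmul, LinearMap.mul'_apply,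
    LinearMap.mulRight_apply] at key2
  rw [← key2]
  have step : ∀ i ∈ ra.index,
      ∑ l ∈ (t i).index, ((t i).left l * antipode (R := k) ((t i).right l))
          ⊗ₜ[k] (d (ra.right i) * h)
        = (1 : A) ⊗ₜ[k] (counit (R := k) (ra.left i) • (d (ra.right i) * h)) := by
    intro i _
    rw [← sum_tmul, sum_mul_antipode_eq_smul (t i), smul_tmul]
  rw [Finset.sum_congr rfl step, ← tmul_sum]
  congr 1
  simp only [← smul_mul_assoc, ← Finset.sum_mul]
  congr 1
  simp only [← map_smul]
  rw [← map_sum, aux_counit_smul k ra]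

open Coalgebra HopfAlgebra in
/-- Theorem 2.6 (part): the quantum-groupoid antipode conditions
`∘(𝒮⊗id)Δ = i∘s` and `∘(id⊗𝒮)Δ = i∘t`. -/
theorem statement8 (act : H ⊗[k] A →ₗ[k] A) (d : A →ₗ[k] H)
    (hcm : HopfCrossedModule k A H act d) :
    circ k A H ∘ₗ map (SS k A H d) LinearMap.id ∘ₗ comul1 k A H = imap k A H ∘ₗ smap k A H
    ∧ circ k A H ∘ₗ map LinearMap.id (SS k A H d) ∘ₗ comul1 k A H
        = imap k A H ∘ₗ tmap k A H d := by
  classical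
  have hdε : ∀ x : A, Coalgebra.counit (R := k) (d x) = Coalgebra.counit (R := k) x :=
    fun x => LinearMap.congr_fun hcm.d_counit x
  constructor
  · refine TensorProduct.ext' fun a h => ?_
    set ra := ℛ k a with hra
    set rh := ℛ k h with hrh
    set r : (i : ra.ι) → Coalgebra.Repr k (ra.left i) (A × A) := fun i => ℛ k (ra.left i) with hr
    simp only [LinearMap.comp_apply]
    rw [aux_comul1_tmul k A H a h ra rh]
    simp only [map_sum, map_tmul, LinearMap.id_coe, id_eq]
    have h1 : ∀ i ∈ ra.index, ∀ j ∈ rh.index,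
        circ k A H (SS k A H d (ra.left i ⊗ₜ[k] rh.left j)
            ⊗ₜ[k] (ra.right i ⊗ₜ[k] rh.right j))
          = (∑ l ∈ (r i).index, Coalgebra.counit (R := k) ((r i).right l)
                • (antipode (R := k) ((r i).left l) * ra.right i))
              ⊗ₜ[k] (Coalgebra.counit (R := k) (rh.left j) • rh.right j) := by
      intro i _ j _
      rw [aux_SS_tmul k A H d _ _ (r i), sum_tmul, map_sum, sum_tmul]
      refine Finset.sum_congr rfl fun l _ => ?_
      rw [aux_circ_tmul, Bialgebra.counit_mul, hdε]
      rw [mul_smul, smul_tmul', smul_tmul', tmul_smul, smul_comm, smul_tmul']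
    rw [Finset.sum_congr rfl fun i hi => Finset.sum_congr rfl (h1 i hi)]
    simp only [← tmul_sum, aux_counit_smul k rh]
    simp only [← sum_tmul]
    have h2 : ∑ i ∈ ra.index, ∑ l ∈ (r i).index,
        Coalgebra.counit (R := k) ((r i).right l)
          • (antipode (R := k) ((r i).left l) * ra.right i)
        = Coalgebra.counit (R := k) a • (1 : A) := by
      have step : ∀ i ∈ ra.index,
          ∑ l ∈ (r i).index, Coalgebra.counit (R := k) ((r i).right l)
              • (antipode (R := k) ((r i).left l) * ra.right i)
            = antipode (R := k) (ra.left i) * ra.right i := by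
        intro i _
        simp only [← smul_mul_assoc, ← Finset.sum_mul, ← map_smul]
        rw [← map_sum, aux_smul_counit k (r i)]
      rw [Finset.sum_congr rfl step, sum_antipode_mul_eq_smul ra]
    rw [h2, smul_tmul]
    simp [imap, smap]
  · refine TensorProduct.ext' fun a h => ?_
    set ra := ℛ k a with hra
    set rh := ℛ k h with hrh
    set s : (i : ra.ι) → Coalgebra.Repr k (ra.right i) (A × A) := fun i => ℛ k (ra.right i) with hs
    simp only [LinearMap.comp_apply]
    rw [aux_comul1_tmul k A H a h ra rh]
    simp only [map_sum, map_tmul, LinearMap.id_coe, id_eq]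
    have h1 : ∀ i ∈ ra.index, ∀ j ∈ rh.index,
        circ k A H ((ra.left i ⊗ₜ[k] rh.left j)
            ⊗ₜ[k] SS k A H d (ra.right i ⊗ₜ[k] rh.right j))
          = ∑ l ∈ (s i).index,
              (ra.left i * antipode (R := k) ((s i).left l))
                ⊗ₜ[k] (d ((s i).right l)
                  * (Coalgebra.counit (R := k) (rh.left j) • rh.right j)) := by
      intro i _ j _
      rw [aux_SS_tmul k A H d _ _ (s i), tmul_sum, map_sum]
      refine Finset.sum_congr rfl fun l _ => ?_
      rw [aux_circ_tmul]
      rw [mul_smul_comm, tmul_smul]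
    rw [Finset.sum_congr rfl fun i hi => Finset.sum_congr rfl (h1 i hi)]
    rw [Finset.sum_congr rfl fun i (_ : i ∈ ra.index) => Finset.sum_comm]
    simp only [← tmul_sum, ← Finset.mul_sum, aux_counit_smul k rh]
    rw [aux_key2 k A H d a h ra s]
    simp [imap, tmap, LinearMap.mul'_apply]

end
end
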